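/- Let ABCD be a tetrahedron and let P and Q be points lying on none of the four face planes of ABCD such that Q is an isogonal conjugate of P with respect to ABCD. Then the midpoint M of the segment PQ is equidistant from the eight orthogonal projections of P and of Q onto the four face planes; that is, all eight projections lie on a single sphere (the common pedal sphere of P and Q) centered at M. -/

import Mathlib

open EuclideanGeometry
open scoped RealInnerProductSpace

noncomputable section

abbrev Pt := EuclideanSpace ℝ (Fin 3)

/-- The unit vector in the direction of `v` (junk value `0` if `v = 0`). -/
def unitv (v : Pt) : Pt := ‖v‖⁻¹ • v

/-- The unit vector in the direction of the component of `v` orthogonal to the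
unit vector `u`. -/
def orthUnit (v u : Pt) : Pt := unitv (v - ⟪v, u⟫ • u)

/-- The internal bisector plane of tetrahedron `XYZW` along the edge `XY`:
the affine plane through `X` whose direction is spanned by the unit vector `u` along
`Y - X` and the sum of the unit vectors along the components of `Z - X` and `W - X`
orthogonal to `u`. -/
def bisectorPlane (X Y Z W : Pt) : AffineSubspace ℝ Pt :=
  AffineSubspace.mk' X (Submodule.span ℝ
    {unitv (Y - X), orthUnit (Z - X) (unitv (Y - X)) + orthUnit (W - X) (unitv (Y - X))})

/-- Reflection of `ℝ³` in the internal bisector plane along edge `XY`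
(with `Z`, `W` the two remaining vertices). -/
def edgeReflect (X Y Z W : Pt) : Pt ≃ᵃⁱ[ℝ] Pt :=
  haveI : Nonempty (bisectorPlane X Y Z W) := ⟨⟨X, AffineSubspace.self_mem_mk' _ _⟩⟩
  EuclideanGeometry.reflection (bisectorPlane X Y Z W)

/-- `Q` lies in the image of the plane through `X, Y, P` under the reflection of `ℝ³`
in the internal bisector plane along the edge `XY` (remaining vertices `Z`, `W`). -/
def IsogCond (X Y Z W P Q : Pt) : Prop :=
  Q ∈ ⇑(edgeReflect X Y Z W) '' (affineSpan ℝ ({X, Y, P} : Set Pt) : Set Pt)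

/-- `Q` is an isogonal conjugate of `P` with respect to the tetrahedron `ABCD`:
for each of the six edges `XY`, `Q` lies in the image of the plane through `X, Y, P`
under the reflection in the internal bisector plane along `XY`. -/
def IsIsogonalConjugate (A B C D P Q : Pt) : Prop :=
  IsogCond A B C D P Q ∧ IsogCond A C B D P Q ∧ IsogCond A D B C P Q ∧
  IsogCond B C A D P Q ∧ IsogCond B D A C P Q ∧ IsogCond C D A B P Q

/-- Orthogonal projection of `P` onto the affine plane spanned by `X, Y, Z`. -/
def faceProj (X Y Z P : Pt) : Pt :=
  haveI : Nonempty (affineSpan ℝ ({X, Y, Z} : Set Pt)) :=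
    ⟨⟨X, subset_affineSpan ℝ _ (by simp)⟩⟩
  (EuclideanGeometry.orthogonalProjection (affineSpan ℝ ({X, Y, Z} : Set Pt)) P : Pt)



lemma li_pair_of_orth {a b : Pt} (ha : a ≠ 0) (hb : b ≠ 0) (hab : ⟪a, b⟫ = 0) :
    LinearIndependent ℝ ![a, b] := by
  rw [LinearIndependent.pair_iff]
  intro s t hst
  have h1 : ⟪a, s • a + t • b⟫ = 0 := by rw [hst]; simp
  have h2 : ⟪b, s • a + t • b⟫ = 0 := by rw [hst]; simp
  have hab' : ⟪b, a⟫ = 0 := by rw [real_inner_comm]; exact hab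
  simp only [inner_add_right, real_inner_smul_right, real_inner_self_eq_norm_sq, hab,
    hab'] at h1 h2
  have ha2 : ‖a‖ ^ 2 ≠ 0 := pow_ne_zero _ (norm_ne_zero_iff.2 ha)
  have hb2 : ‖b‖ ^ 2 ≠ 0 := pow_ne_zero _ (norm_ne_zero_iff.2 hb)
  have ha2 := ha2; have hb2 := hb2
  refine ⟨(mul_eq_zero.mp (by linarith)).resolve_right ha2,
    (mul_eq_zero.mp (by linarith)).resolve_right hb2⟩

lemma span_pair_eq_orth {a b n : Pt} (hn : n ≠ 0)
    (hli : LinearIndependent ℝ ![a, b]) (ha : ⟪n, a⟫ = 0) (hb : ⟪n, b⟫ = 0) :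
    Submodule.span ℝ {a, b} = (ℝ ∙ n)ᗮ := by
  apply Submodule.eq_of_le_of_finrank_eq
  · rw [Submodule.span_le]
    rintro x hx
    simp only [Set.mem_insert_iff, Set.mem_singleton_iff] at hx
    rcases hx with rfl | rfl
    · exact Submodule.mem_orthogonal_singleton_iff_inner_right.2 ha
    · exact Submodule.mem_orthogonal_singleton_iff_inner_right.2 hb
  · have hr : Set.range ![a, b] = {a, b} := by
      ext x; simp [Matrix.range_cons, Matrix.range_empty]; tauto
    have h1 : Module.finrank ℝ (Submodule.span ℝ ({a, b} : Set Pt)) = 2 := by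
      rw [← hr, finrank_span_eq_card hli]; simp
    have h2 := Submodule.finrank_add_finrank_orthogonal (K := (ℝ ∙ n))
    rw [finrank_span_singleton hn, finrank_euclideanSpace_fin] at h2
    omega


lemma orthProj_formula (S : AffineSubspace ℝ Pt) [Nonempty S]
    [S.direction.HasOrthogonalProjection] {X n : Pt} (hX : X ∈ S) (hn : n ≠ 0)
    (hdir : S.direction = (ℝ ∙ n)ᗮ) (P : Pt) :
    (EuclideanGeometry.orthogonalProjection S P : Pt) = P - (⟪P - X, n⟫ / ‖n‖ ^ 2) • n := by
  have hn2 : ‖n‖ ^ 2 ≠ 0 := pow_ne_zero _ (norm_ne_zero_iff.2 hn)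
  set t : ℝ := ⟪P - X, n⟫ / ‖n‖ ^ 2 with ht
  have hmem : P - t • n ∈ S := by
    have hv : (P - X) - t • n ∈ S.direction := by
      rw [hdir, Submodule.mem_orthogonal_singleton_iff_inner_right, inner_sub_right,
        real_inner_smul_right, real_inner_self_eq_norm_sq, real_inner_comm (P - X) n, ht]
      field_simp
      ring
    have h2 := AffineSubspace.vadd_mem_of_mem_direction hv hX
    have : ((P - X) - t • n) +ᵥ X = P - t • n := by
      simp only [vadd_eq_add]; abel
    rwa [this] at h2
  have hmem2 : P - t • n ∈ AffineSubspace.mk' P S.directionᗮ := by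
    rw [AffineSubspace.mem_mk']
    have h4 : (P - t • n) -ᵥ P = -(t • n) := by simp only [vsub_eq_sub]; abel
    rw [h4, hdir, Submodule.orthogonal_orthogonal]
    exact Submodule.neg_mem _ (Submodule.smul_mem _ _ (Submodule.mem_span_singleton_self n))
  have hsing := EuclideanGeometry.inter_eq_singleton_orthogonalProjection (s := S) P
  have hmem3 : P - t • n ∈ ({((EuclideanGeometry.orthogonalProjection S P : Pt)) } : Set Pt) := by
    rw [← hsing]; exact ⟨hmem, hmem2⟩
  exact (Set.mem_singleton_iff.mp hmem3).symm

lemma affineSpan_triple (X Y Z : Pt) :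
    affineSpan ℝ ({X, Y, Z} : Set Pt) = AffineSubspace.mk' X (Submodule.span ℝ {Y - X, Z - X}) := by
  apply le_antisymm
  · rw [affineSpan_le]
    rintro p hp
    simp only [Set.mem_insert_iff, Set.mem_singleton_iff] at hp
    rw [SetLike.mem_coe, AffineSubspace.mem_mk', vsub_eq_sub]
    rcases hp with rfl | rfl | rfl
    · simp
    · exact Submodule.subset_span (by simp)
    · exact Submodule.subset_span (by simp)
  · intro p hp
    rw [AffineSubspace.mem_mk'] at hp
    have hX : X ∈ affineSpan ℝ ({X, Y, Z} : Set Pt) := subset_affineSpan ℝ _ (by simp)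
    have hY : Y ∈ affineSpan ℝ ({X, Y, Z} : Set Pt) := subset_affineSpan ℝ _ (by simp)
    have hZ : Z ∈ affineSpan ℝ ({X, Y, Z} : Set Pt) := subset_affineSpan ℝ _ (by simp)
    have hspan : Submodule.span ℝ {Y - X, Z - X} ≤
        (affineSpan ℝ ({X, Y, Z} : Set Pt)).direction := by
      rw [Submodule.span_le]
      rintro v hv
      simp only [Set.mem_insert_iff, Set.mem_singleton_iff] at hv
      rcases hv with rfl | rfl
      · simpa [vsub_eq_sub] using AffineSubspace.vsub_mem_direction hY hX
      · simpa [vsub_eq_sub] using AffineSubspace.vsub_mem_direction hZ hX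
    have h2 := AffineSubspace.vadd_mem_of_mem_direction (hspan hp) hX
    have : (p -ᵥ X) +ᵥ X = p := by simp
    rwa [this] at h2

lemma dist_midpoint_sq {n : Pt} (hn : n ≠ 0) (X P Q : Pt) :
    dist (midpoint ℝ P Q) (P - (⟪P - X, n⟫ / ‖n‖ ^ 2) • n) ^ 2
      = ‖P - Q‖ ^ 2 / 4 + ⟪P - X, n⟫ * ⟪Q - X, n⟫ / ‖n‖ ^ 2 := by
  have hn2 : ‖n‖ ^ 2 ≠ 0 := pow_ne_zero _ (norm_ne_zero_iff.2 hn)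
  set tP : ℝ := ⟪P - X, n⟫ / ‖n‖ ^ 2 with htP
  have hmid : midpoint ℝ P Q - (P - tP • n) = (2:ℝ)⁻¹ • (Q - P) + tP • n := by
    rw [midpoint_eq_smul_add, invOf_eq_inv]
    module
  have hQP : ⟪Q - P, n⟫ = ⟪Q - X, n⟫ - ⟪P - X, n⟫ := by
    rw [show Q - P = (Q - X) - (P - X) by abel, inner_sub_left]
  rw [dist_eq_norm, hmid, norm_add_sq_real, real_inner_smul_left, real_inner_smul_right, hQP,
    norm_smul, norm_smul]
  rw [show ‖P - Q‖ = ‖Q - P‖ from norm_sub_rev _ _]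
  simp only [norm_inv, Real.norm_ofNat, Real.norm_eq_abs, mul_pow, sq_abs]
  rw [htP]
  field_simp [htP]
  ring

lemma norm_unitv {v : Pt} (hv : v ≠ 0) : ‖unitv v‖ = 1 := by
  have : ‖v‖ ≠ 0 := norm_ne_zero_iff.2 hv
  simp [unitv, norm_smul, abs_of_nonneg (norm_nonneg v), inv_mul_cancel₀ this]

lemma unitv_ne_zero {v : Pt} (hv : v ≠ 0) : unitv v ≠ 0 := by
  intro h; have := norm_unitv hv; rw [h] at this; simp at this

lemma exists_normal {a b : Pt} (hli : LinearIndependent ℝ ![a, b]) :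
    ∃ n : Pt, n ≠ 0 ∧ ⟪n, a⟫ = 0 ∧ ⟪n, b⟫ = 0 := by
  have hbot : (Submodule.span ℝ ({a, b} : Set Pt))ᗮ ≠ ⊥ := by
    intro h0
    have hr : Set.range ![a, b] = {a, b} := by
      ext x; simp [Matrix.range_cons, Matrix.range_empty]; tauto
    have h1 : Module.finrank ℝ (Submodule.span ℝ ({a, b} : Set Pt)) = 2 := by
      rw [← hr, finrank_span_eq_card hli]; simp
    have h2 := Submodule.finrank_add_finrank_orthogonal (K := Submodule.span ℝ ({a, b} : Set Pt))
    rw [h0, h1, finrank_euclideanSpace_fin] at h2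
    simp at h2
  obtain ⟨n, hmem, hn0⟩ := Submodule.exists_mem_ne_zero_of_ne_bot hbot
  have h := (Submodule.mem_orthogonal _ n).mp hmem
  refine ⟨n, hn0, ?_, ?_⟩
  · rw [real_inner_comm]; exact h a (Submodule.subset_span (by simp))
  · rw [real_inner_comm]; exact h b (Submodule.subset_span (by simp))

lemma faceProj_formula {X Y Z n : Pt} (hn : n ≠ 0) (h1 : ⟪n, Y - X⟫ = 0)
    (h2 : ⟪n, Z - X⟫ = 0) (hli : LinearIndependent ℝ ![Y - X, Z - X]) (P : Pt) :
    faceProj X Y Z P = P - (⟪P - X, n⟫ / ‖n‖ ^ 2) • n := by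
  haveI : Nonempty (affineSpan ℝ ({X, Y, Z} : Set Pt)) :=
    ⟨⟨X, subset_affineSpan ℝ _ (by simp)⟩⟩
  refine orthProj_formula _ (subset_affineSpan ℝ _ (by simp)) hn ?_ P
  rw [affineSpan_triple, AffineSubspace.direction_mk']
  exact span_pair_eq_orth hn hli h1 h2

lemma dist_faceProj_sq {X Y Z : Pt} (hli : LinearIndependent ℝ ![Y - X, Z - X]) (P Q : Pt) :
    dist (midpoint ℝ P Q) (faceProj X Y Z P) ^ 2
      = ‖P - Q‖ ^ 2 / 4 + ⟪P - faceProj X Y Z P, Q - faceProj X Y Z Q⟫ := by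
  obtain ⟨n, hn, ha, hb⟩ := exists_normal hli
  have hn2 : ‖n‖ ^ 2 ≠ 0 := pow_ne_zero _ (norm_ne_zero_iff.2 hn)
  rw [faceProj_formula hn ha hb hli P, faceProj_formula hn ha hb hli Q,
    dist_midpoint_sq hn]
  congr 1
  rw [show P - (P - (⟪P - X, n⟫ / ‖n‖ ^ 2) • n) = (⟪P - X, n⟫ / ‖n‖ ^ 2) • n by abel,
    show Q - (Q - (⟪Q - X, n⟫ / ‖n‖ ^ 2) • n) = (⟪Q - X, n⟫ / ‖n‖ ^ 2) • n by abel,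
    real_inner_smul_left, real_inner_smul_right, real_inner_self_eq_norm_sq]
  field_simp

lemma dist_faceProj_sq' {X Y Z : Pt} (hli : LinearIndependent ℝ ![Y - X, Z - X]) (P Q : Pt) :
    dist (midpoint ℝ P Q) (faceProj X Y Z Q) ^ 2
      = ‖P - Q‖ ^ 2 / 4 + ⟪P - faceProj X Y Z P, Q - faceProj X Y Z Q⟫ := by
  have h := dist_faceProj_sq hli Q P
  rw [midpoint_comm, norm_sub_rev] at h
  rw [h, real_inner_comm]

lemma orthProj_congr {S S' : AffineSubspace ℝ Pt} [Nonempty S] [Nonempty S']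
    [S.direction.HasOrthogonalProjection] [S'.direction.HasOrthogonalProjection]
    (h : S = S') (R : Pt) :
    (EuclideanGeometry.orthogonalProjection S R : Pt)
      = EuclideanGeometry.orthogonalProjection S' R := by
  subst h; rfl

lemma faceProj_congr {X Y Z X' Y' Z' : Pt} (h : ({X, Y, Z} : Set Pt) = {X', Y', Z'}) (R : Pt) :
    faceProj X Y Z R = faceProj X' Y' Z' R := by
  haveI : Nonempty (affineSpan ℝ ({X, Y, Z} : Set Pt)) :=
    ⟨⟨X, subset_affineSpan ℝ _ (by simp)⟩⟩
  haveI : Nonempty (affineSpan ℝ ({X', Y', Z'} : Set Pt)) :=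
    ⟨⟨X', subset_affineSpan ℝ _ (by simp)⟩⟩
  unfold faceProj
  exact orthProj_congr (by rw [h]) R

lemma edge_lemma {X Y Z W P Q : Pt}
    (h3 : ∀ a b c : ℝ, a • (Y - X) + b • (Z - X) + c • (W - X) = 0 → a = 0 ∧ b = 0 ∧ c = 0)
    (h : IsogCond X Y Z W P Q) :
    ⟪P - faceProj X Y Z P, Q - faceProj X Y Z Q⟫
      = ⟪P - faceProj X Y W P, Q - faceProj X Y W Q⟫ := by
  have he : Y - X ≠ 0 := by
    intro h0
    simpa using (h3 1 0 0 (by rw [h0]; module)).1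
  set u : Pt := unitv (Y - X) with hu_def
  have huYX : u = ‖Y - X‖⁻¹ • (Y - X) := rfl
  have hu : ‖u‖ = 1 := norm_unitv he
  have hu_ne : u ≠ 0 := unitv_ne_zero he
  have huu : ⟪u, u⟫ = 1 := by rw [real_inner_self_eq_norm_sq, hu]; norm_num
  have hYu : Y - X = ‖Y - X‖ • u := (smul_inv_smul₀ (norm_ne_zero_iff.2 he) _).symm
  set cz : Pt := (Z - X) - ⟪Z - X, u⟫ • u with hcz_def
  set cw : Pt := (W - X) - ⟪W - X, u⟫ • u with hcw_def
  have hnotpar : ∀ k : ℝ, cz ≠ k • cw := by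
    intro k hk
    rw [hcz_def, hcw_def] at hk
    have hcomb : (-((⟪Z - X, u⟫ - k * ⟪W - X, u⟫) * ‖Y - X‖⁻¹)) • (Y - X)
        + (1 : ℝ) • (Z - X) + (-k) • (W - X) = 0 := by
      linear_combination (norm := module) hk + (⟪Z - X, u⟫ - k * ⟪W - X, u⟫) • huYX
    simpa using (h3 _ 1 (-k) hcomb).2.1
  have hcz_ne : cz ≠ 0 := by
    intro h0; exact hnotpar 0 (by rw [h0, zero_smul])
  have hcw_ne : cw ≠ 0 := by
    intro h0
    rw [hcw_def] at h0
    have hcomb : (-(⟪W - X, u⟫ * ‖Y - X‖⁻¹)) • (Y - X) + (0 : ℝ) • (Z - X)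
        + (1 : ℝ) • (W - X) = 0 := by
      linear_combination (norm := module) h0 + ⟪W - X, u⟫ • huYX
    simpa using (h3 _ 0 1 hcomb).2.2
  set z : Pt := orthUnit (Z - X) u with hz_def
  set w : Pt := orthUnit (W - X) u with hw_def
  have hz_cz : ‖cz‖ • z = cz := by
    show ‖cz‖ • (‖cz‖⁻¹ • cz) = cz
    exact smul_inv_smul₀ (norm_ne_zero_iff.2 hcz_ne) cz
  have hw_cw : ‖cw‖ • w = cw := by
    show ‖cw‖ • (‖cw‖⁻¹ • cw) = cw
    exact smul_inv_smul₀ (norm_ne_zero_iff.2 hcw_ne) cw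
  have hz : ‖z‖ = 1 := norm_unitv hcz_ne
  have hw : ‖w‖ = 1 := norm_unitv hcw_ne
  have hzz : ⟪z, z⟫ = 1 := by rw [real_inner_self_eq_norm_sq, hz]; norm_num
  have hww : ⟪w, w⟫ = 1 := by rw [real_inner_self_eq_norm_sq, hw]; norm_num
  have hczu : ⟪cz, u⟫ = 0 := by
    rw [hcz_def, inner_sub_left, real_inner_smul_left, huu]; ring
  have hcwu : ⟪cw, u⟫ = 0 := by
    rw [hcw_def, inner_sub_left, real_inner_smul_left, huu]; ring
  have hzu : ⟪z, u⟫ = 0 := by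
    show ⟪‖cz‖⁻¹ • cz, u⟫ = 0
    rw [real_inner_smul_left, hczu, mul_zero]
  have hwu : ⟪w, u⟫ = 0 := by
    show ⟪‖cw‖⁻¹ • cw, u⟫ = 0
    rw [real_inner_smul_left, hcwu, mul_zero]
  have hZdecomp : Z - X = ‖cz‖ • z + ⟪Z - X, u⟫ • u := by
    rw [hz_cz, hcz_def]; module
  have hWdecomp : W - X = ‖cw‖ • w + ⟪W - X, u⟫ • u := by
    rw [hw_cw, hcw_def]; module
  have hw_def' : w = ‖cw‖⁻¹ • cw := rfl
  have hzw_sub : z - w ≠ 0 := by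
    intro h0
    have hzw : z = w := sub_eq_zero.mp h0
    refine hnotpar (‖cz‖ * ‖cw‖⁻¹) ?_
    calc cz = ‖cz‖ • z := hz_cz.symm
      _ = ‖cz‖ • (‖cw‖⁻¹ • cw) := by rw [hzw, hw_def']
      _ = (‖cz‖ * ‖cw‖⁻¹) • cw := by module
  have hzw_add : z + w ≠ 0 := by
    intro h0
    have hzw : z = -w := by linear_combination (norm := module) h0
    refine hnotpar (-(‖cz‖ * ‖cw‖⁻¹)) ?_
    calc cz = ‖cz‖ • z := hz_cz.symm
      _ = ‖cz‖ • -(‖cw‖⁻¹ • cw) := by rw [hzw, hw_def']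
      _ = (-(‖cz‖ * ‖cw‖⁻¹)) • cw := by module
  set m : Pt := unitv (z - w) with hm_def
  have hm : ‖m‖ = 1 := norm_unitv hzw_sub
  have hm_ne : m ≠ 0 := unitv_ne_zero hzw_sub
  have hm_eq : ‖z - w‖ • m = z - w := smul_inv_smul₀ (norm_ne_zero_iff.2 hzw_sub) _
  have hmu : ⟪m, u⟫ = 0 := by
    show ⟪‖z - w‖⁻¹ • (z - w), u⟫ = 0
    rw [real_inner_smul_left, inner_sub_left, hzu, hwu]; ring
  have hmzw : ⟪m, z + w⟫ = 0 := by
    show ⟪‖z - w‖⁻¹ • (z - w), z + w⟫ = 0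
    rw [real_inner_smul_left, inner_add_right, inner_sub_left, inner_sub_left, hzz, hww,
      real_inner_comm w z]
    ring
  set c : ℝ := ⟪m, z⟫ with hc_def
  have hmw : ⟪m, w⟫ = -c := by
    have := hmzw; rw [inner_add_right, ← hc_def] at this; linarith
  have hnorm_zw : ‖z - w‖ ^ 2 = 2 - 2 * ⟪z, w⟫ := by
    rw [norm_sub_sq_real, hz, hw]; ring
  have hc_val : c = ‖z - w‖⁻¹ * (1 - ⟪z, w⟫) := by
    rw [hc_def]
    show ⟪‖z - w‖⁻¹ • (z - w), z⟫ = _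
    rw [real_inner_smul_left, inner_sub_left, hzz, real_inner_comm w z]
  have h2c : z - w = (2 * c) • m := by
    have hs : ‖z - w‖ ≠ 0 := norm_ne_zero_iff.2 hzw_sub
    have h2c' : 2 * c = ‖z - w‖ := by
      have h9 : (1 : ℝ) - ⟪z, w⟫ = ‖z - w‖ * ‖z - w‖ / 2 := by
        rw [pow_two] at hnorm_zw; linarith
      rw [hc_val, h9]
      calc 2 * (‖z - w‖⁻¹ * (‖z - w‖ * ‖z - w‖ / 2)) = ‖z - w‖⁻¹ * ‖z - w‖ * ‖z - w‖ := by ring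
        _ = ‖z - w‖ := by rw [inv_mul_cancel₀ hs, one_mul]
    rw [h2c', hm_eq]
  have hw_eq : w = z - (2 * c) • m := by rw [← h2c]; module
  have hc2 : 1 - c ^ 2 ≠ 0 := by
    intro h0
    have hfac : (c - 1) * (c + 1) = 0 := by ring_nf; linarith
    have hbad : ⟪z, w⟫ = -1 → False := by
      intro hzw1
      have hnz : ‖z + w‖ ^ 2 = 0 := by rw [norm_add_sq_real, hz, hw, hzw1]; ring
      exact hzw_add (by simpa using (pow_eq_zero_iff two_ne_zero).mp hnz)
    rcases mul_eq_zero.mp hfac with h2 | h2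
    · have hc1 : c = 1 := by linarith
      have hnz : ‖m - z‖ ^ 2 = 0 := by
        rw [norm_sub_sq_real, hm, hz, ← hc_def, hc1]; ring
      have hmz : m = z := sub_eq_zero.mp (norm_eq_zero.mp ((pow_eq_zero_iff two_ne_zero).mp hnz))
      apply hbad
      have h5 := hmzw
      rw [hmz, inner_add_right, hzz] at h5
      linarith
    · have hc1 : c = -1 := by linarith
      have hnz : ‖m + z‖ ^ 2 = 0 := by
        rw [norm_add_sq_real, hm, hz, ← hc_def, hc1]; ring
      have hmz : m = -z := by
        have h4 := norm_eq_zero.mp ((pow_eq_zero_iff two_ne_zero).mp hnz)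
        linear_combination (norm := module) h4
      apply hbad
      have h5 := hmzw
      rw [hmz, inner_add_right, inner_neg_left, inner_neg_left, hzz] at h5
      linarith
  -- the two face normals
  set n₁ : Pt := m - c • z with hn1_def
  set n₂ : Pt := m + c • w with hn2_def
  have hmm : ⟪m, m⟫ = 1 := by rw [real_inner_self_eq_norm_sq, hm]; norm_num
  have hn1z : ⟪n₁, z⟫ = 0 := by
    rw [hn1_def, inner_sub_left, real_inner_smul_left, hzz, ← hc_def]; ring
  have hn1u : ⟪n₁, u⟫ = 0 := by
    rw [hn1_def, inner_sub_left, real_inner_smul_left, hmu, hzu]; ring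
  have hn1m : ⟪n₁, m⟫ = 1 - c ^ 2 := by
    rw [hn1_def, inner_sub_left, real_inner_smul_left, hmm, real_inner_comm m z, ← hc_def]; ring
  have hn2w : ⟪n₂, w⟫ = 0 := by
    rw [hn2_def, inner_add_left, real_inner_smul_left, hww, hmw]; ring
  have hn2u : ⟪n₂, u⟫ = 0 := by
    rw [hn2_def, inner_add_left, real_inner_smul_left, hmu, hwu]; ring
  have hn2m : ⟪n₂, m⟫ = 1 - c ^ 2 := by
    rw [hn2_def, inner_add_left, real_inner_smul_left, hmm, real_inner_comm m w, hmw]; ring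
  have hn1norm : ‖n₁‖ ^ 2 = 1 - c ^ 2 := by
    rw [← real_inner_self_eq_norm_sq]
    nth_rewrite 2 [hn1_def]
    rw [inner_sub_right, real_inner_smul_right, hn1m, hn1z]; ring
  have hn2norm : ‖n₂‖ ^ 2 = 1 - c ^ 2 := by
    rw [← real_inner_self_eq_norm_sq]
    nth_rewrite 2 [hn2_def]
    rw [inner_add_right, real_inner_smul_right, hn2m, hn2w]; ring
  have hn1_ne : n₁ ≠ 0 := by
    intro h0; apply hc2; rw [← hn1norm, h0]; simp
  have hn2_ne : n₂ ≠ 0 := by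
    intro h0; apply hc2; rw [← hn2norm, h0]; simp
  have hn1Y : ⟪n₁, Y - X⟫ = 0 := by
    rw [hYu, real_inner_smul_right, hn1u, mul_zero]
  have hn2Y : ⟪n₂, Y - X⟫ = 0 := by
    rw [hYu, real_inner_smul_right, hn2u, mul_zero]
  have hn1Z : ⟪n₁, Z - X⟫ = 0 := by
    rw [hZdecomp, inner_add_right, real_inner_smul_right, real_inner_smul_right, hn1z, hn1u]; ring
  have hn2W : ⟪n₂, W - X⟫ = 0 := by
    rw [hWdecomp, inner_add_right, real_inner_smul_right, real_inner_smul_right, hn2w, hn2u]; ring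
  have hsum : n₁ + n₂ = (2 - 2 * c ^ 2) • m := by
    rw [hn1_def, hn2_def, hw_eq]
    match_scalars <;> ring
  have hrefl_apply : ∀ t : Pt, edgeReflect X Y Z W t = t - (2 * ⟪t - X, m⟫) • m := by
    intro t
    haveI : Nonempty (bisectorPlane X Y Z W) := ⟨⟨X, AffineSubspace.self_mem_mk' _ _⟩⟩
    have hdir : (bisectorPlane X Y Z W).direction = (ℝ ∙ m)ᗮ := by
      rw [bisectorPlane, AffineSubspace.direction_mk', ← hu_def, ← hz_def, ← hw_def]
      exact span_pair_eq_orth hm_ne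
        (li_pair_of_orth hu_ne hzw_add
          (by rw [inner_add_right, real_inner_comm z u, real_inner_comm w u, hzu, hwu]; ring))
        hmu hmzw
    have hproj := orthProj_formula (bisectorPlane X Y Z W)
      (AffineSubspace.self_mem_mk' X _) hm_ne hdir t
    have hshow : edgeReflect X Y Z W t
        = EuclideanGeometry.reflection (bisectorPlane X Y Z W) t := rfl
    rw [hshow, EuclideanGeometry.reflection_apply', hproj, hm, one_pow, div_one]
    simp only [vsub_eq_sub, vadd_eq_add]
    module
  obtain ⟨s, hs, hfs⟩ := h
  rw [SetLike.mem_coe, affineSpan_triple, AffineSubspace.mem_mk', vsub_eq_sub,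
    Submodule.mem_span_pair] at hs
  obtain ⟨a, b, hab⟩ := hs
  have hYm : ⟪Y - X, m⟫ = 0 := by
    rw [hYu, real_inner_smul_left, real_inner_comm m u, hmu, mul_zero]
  have hsM : ⟪s - X, m⟫ = b * ⟪P - X, m⟫ := by
    rw [← hab, inner_add_left, real_inner_smul_left, real_inner_smul_left, hYm]; ring
  have hQX : Q - X = a • (Y - X) + b • ((P - X) - (2 * ⟪P - X, m⟫) • m) := by
    rw [← hfs, hrefl_apply s, hsM]
    have h7 : s - X = a • (Y - X) + b • (P - X) := hab.symm
    rw [show s - (2 * (b * ⟪P - X, m⟫)) • m - X = (s - X) - (2 * (b * ⟪P - X, m⟫)) • m by module,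
      h7]
    module
  have hQX' : Q - X = a • (Y - X) + b • (P - X) + (-(2 * b * ⟪P - X, m⟫)) • m := by
    rw [hQX]; module
  have hPsum : ⟪P - X, n₁⟫ + ⟪P - X, n₂⟫ = (2 - 2 * c ^ 2) * ⟪P - X, m⟫ := by
    rw [← inner_add_right, hsum, real_inner_smul_right]
  have hq1 : ⟪Q - X, n₁⟫ = -b * ⟪P - X, n₂⟫ := by
    have hYm1 : ⟪Y - X, n₁⟫ = 0 := by rw [real_inner_comm n₁ (Y - X)]; exact hn1Y
    have hmn1 : ⟪m, n₁⟫ = 1 - c ^ 2 := by rw [real_inner_comm n₁ m]; exact hn1m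
    rw [hQX']
    simp only [inner_add_left, real_inner_smul_left, hYm1, hmn1]
    linear_combination b * hPsum
  have hq2 : ⟪Q - X, n₂⟫ = -b * ⟪P - X, n₁⟫ := by
    have hYm2 : ⟪Y - X, n₂⟫ = 0 := by rw [real_inner_comm n₂ (Y - X)]; exact hn2Y
    have hmn2 : ⟪m, n₂⟫ = 1 - c ^ 2 := by rw [real_inner_comm n₂ m]; exact hn2m
    rw [hQX']
    simp only [inner_add_left, real_inner_smul_left, hYm2, hmn2]
    linear_combination b * hPsum
  have hliYZ : LinearIndependent ℝ ![Y - X, Z - X] := by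
    rw [LinearIndependent.pair_iff]
    intro s' t' hst
    have h9 := h3 s' t' 0 (by rw [show s' • (Y - X) + t' • (Z - X) + (0:ℝ) • (W - X)
      = s' • (Y - X) + t' • (Z - X) by module, hst])
    exact ⟨h9.1, h9.2.1⟩
  have hliYW : LinearIndependent ℝ ![Y - X, W - X] := by
    rw [LinearIndependent.pair_iff]
    intro s' t' hst
    have h9 := h3 s' 0 t' (by rw [show s' • (Y - X) + (0:ℝ) • (Z - X) + t' • (W - X)
      = s' • (Y - X) + t' • (W - X) by module, hst])
    exact ⟨h9.1, h9.2.2⟩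
  rw [faceProj_formula hn1_ne hn1Y hn1Z hliYZ P, faceProj_formula hn1_ne hn1Y hn1Z hliYZ Q,
    faceProj_formula hn2_ne hn2Y hn2W hliYW P, faceProj_formula hn2_ne hn2Y hn2W hliYW Q]
  rw [show P - (P - (⟪P - X, n₁⟫ / ‖n₁‖ ^ 2) • n₁) = (⟪P - X, n₁⟫ / ‖n₁‖ ^ 2) • n₁ by abel,
    show Q - (Q - (⟪Q - X, n₁⟫ / ‖n₁‖ ^ 2) • n₁) = (⟪Q - X, n₁⟫ / ‖n₁‖ ^ 2) • n₁ by abel,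
    show P - (P - (⟪P - X, n₂⟫ / ‖n₂‖ ^ 2) • n₂) = (⟪P - X, n₂⟫ / ‖n₂‖ ^ 2) • n₂ by abel,
    show Q - (Q - (⟪Q - X, n₂⟫ / ‖n₂‖ ^ 2) • n₂) = (⟪Q - X, n₂⟫ / ‖n₂‖ ^ 2) • n₂ by abel]
  rw [real_inner_smul_left, real_inner_smul_right, real_inner_smul_left, real_inner_smul_right,
    real_inner_self_eq_norm_sq n₁, real_inner_self_eq_norm_sq n₂]
  rw [hn1norm, hn2norm, hq1, hq2]
  field_simp

/-- If `P` and `Q` are isogonal conjugates with respect to a tetrahedron `ABCD`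
(both lying on none of the four face planes), then the eight orthogonal projections of
`P` and `Q` onto the face planes are all equidistant from the midpoint `M` of `PQ`,
i.e. they lie on a common (pedal) sphere centered at `M`. -/
theorem isogonal_conjugate_pedal_sphere
    (A B C D P Q : Pt) (hindep : AffineIndependent ℝ ![A, B, C, D])
    (hP₁ : P ∉ affineSpan ℝ ({B, C, D} : Set Pt))
    (hP₂ : P ∉ affineSpan ℝ ({A, C, D} : Set Pt))
    (hP₃ : P ∉ affineSpan ℝ ({A, B, D} : Set Pt))
    (hP₄ : P ∉ affineSpan ℝ ({A, B, C} : Set Pt))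
    (hQ₁ : Q ∉ affineSpan ℝ ({B, C, D} : Set Pt))
    (hQ₂ : Q ∉ affineSpan ℝ ({A, C, D} : Set Pt))
    (hQ₃ : Q ∉ affineSpan ℝ ({A, B, D} : Set Pt))
    (hQ₄ : Q ∉ affineSpan ℝ ({A, B, C} : Set Pt))
    (hconj : IsIsogonalConjugate A B C D P Q) :
    ∃ r : ℝ,
      dist (midpoint ℝ P Q) (faceProj B C D P) = r ∧
      dist (midpoint ℝ P Q) (faceProj A C D P) = r ∧
      dist (midpoint ℝ P Q) (faceProj A B D P) = r ∧
      dist (midpoint ℝ P Q) (faceProj A B C P) = r ∧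
      dist (midpoint ℝ P Q) (faceProj B C D Q) = r ∧
      dist (midpoint ℝ P Q) (faceProj A C D Q) = r ∧
      dist (midpoint ℝ P Q) (faceProj A B D Q) = r ∧
      dist (midpoint ℝ P Q) (faceProj A B C Q) = r := by
  have h3 : ∀ a b c : ℝ, a • (B - A) + b • (C - A) + c • (D - A) = 0
      → a = 0 ∧ b = 0 ∧ c = 0 := by
    intro a b c habc
    have hsum0 : ∑ i, (![-(a + b + c), a, b, c] : Fin 4 → ℝ) i = 0 := by
      rw [Fin.sum_univ_four]
      simp only [Matrix.cons_val_zero, Matrix.cons_val_one, Matrix.head_cons,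
        Matrix.cons_val_two, Matrix.cons_val_three, Matrix.tail_cons]
      ring
    have hvec : ∑ i, (![-(a + b + c), a, b, c] : Fin 4 → ℝ) i • (![A, B, C, D] i) = 0 := by
      rw [Fin.sum_univ_four]
      simp only [Matrix.cons_val_zero, Matrix.cons_val_one, Matrix.head_cons,
        Matrix.cons_val_two, Matrix.cons_val_three, Matrix.tail_cons]
      linear_combination (norm := module) habc
    have hw := affineIndependent_iff.mp hindep Finset.univ ![-(a + b + c), a, b, c] hsum0 hvec
    exact ⟨by simpa using hw 1 (Finset.mem_univ _), by simpa using hw 2 (Finset.mem_univ _),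
      by simpa using hw 3 (Finset.mem_univ _)⟩
  have hAC' : ∀ a b c : ℝ, a • (C - A) + b • (B - A) + c • (D - A) = 0
      → a = 0 ∧ b = 0 ∧ c = 0 := by
    intro a b c habc
    obtain ⟨h1, h2, h3'⟩ := h3 b a c (by linear_combination (norm := module) habc)
    exact ⟨h2, h1, h3'⟩
  have hBC' : ∀ a b c : ℝ, a • (C - B) + b • (A - B) + c • (D - B) = 0
      → a = 0 ∧ b = 0 ∧ c = 0 := by
    intro a b c habc
    obtain ⟨h1, h2, h3'⟩ := h3 (-a - b - c) a c (by linear_combination (norm := module) habc)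
    exact ⟨h2, by linarith, h3'⟩
  have hAB := edge_lemma h3 hconj.1
  have hAC := edge_lemma hAC' hconj.2.1
  have hBC := edge_lemma hBC' hconj.2.2.2.1
  have e1 : ∀ R, faceProj A C B R = faceProj A B C R := fun R =>
    faceProj_congr (by ext x; constructor <;> (intro hx; simp at hx ⊢; tauto)) R
  have e2 : ∀ R, faceProj B C A R = faceProj A B C R := fun R =>
    faceProj_congr (by ext x; constructor <;> (intro hx; simp at hx ⊢; tauto)) R
  rw [e1 P, e1 Q] at hAC
  rw [e2 P, e2 Q] at hBC
  have liABC : LinearIndependent ℝ ![B - A, C - A] := by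
    rw [LinearIndependent.pair_iff]; intro s t hst
    have h9 := h3 s t 0 (by rw [show s • (B - A) + t • (C - A) + (0:ℝ) • (D - A)
      = s • (B - A) + t • (C - A) by module, hst])
    exact ⟨h9.1, h9.2.1⟩
  have liABD : LinearIndependent ℝ ![B - A, D - A] := by
    rw [LinearIndependent.pair_iff]; intro s t hst
    have h9 := h3 s 0 t (by rw [show s • (B - A) + (0:ℝ) • (C - A) + t • (D - A)
      = s • (B - A) + t • (D - A) by module, hst])
    exact ⟨h9.1, h9.2.2⟩
  have liACD : LinearIndependent ℝ ![C - A, D - A] := by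
    rw [LinearIndependent.pair_iff]; intro s t hst
    have h9 := h3 0 s t (by rw [show (0:ℝ) • (B - A) + s • (C - A) + t • (D - A)
      = s • (C - A) + t • (D - A) by module, hst])
    exact ⟨h9.2.1, h9.2.2⟩
  have liBCD : LinearIndependent ℝ ![C - B, D - B] := by
    rw [LinearIndependent.pair_iff]; intro s t hst
    have h9 := hBC' s 0 t (by rw [show s • (C - B) + (0:ℝ) • (A - B) + t • (D - B)
      = s • (C - B) + t • (D - B) by module, hst])
    exact ⟨h9.1, h9.2.2⟩
  set κ : ℝ := ⟪P - faceProj A B C P, Q - faceProj A B C Q⟫ with hκ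
  have kABD : ⟪P - faceProj A B D P, Q - faceProj A B D Q⟫ = κ := hAB.symm
  have kACD : ⟪P - faceProj A C D P, Q - faceProj A C D Q⟫ = κ := hAC.symm
  have kBCD : ⟪P - faceProj B C D P, Q - faceProj B C D Q⟫ = κ := hBC.symm
  have deq : ∀ x y : ℝ, 0 ≤ x → 0 ≤ y → x ^ 2 = y ^ 2 → x = y := by
    intro x y hx hy hxy
    rw [← Real.sqrt_sq hx, ← Real.sqrt_sq hy, hxy]
  have d1 := dist_faceProj_sq liBCD P Q
  have d1' := dist_faceProj_sq' liBCD P Q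
  have d2 := dist_faceProj_sq liACD P Q
  have d2' := dist_faceProj_sq' liACD P Q
  have d3 := dist_faceProj_sq liABD P Q
  have d3' := dist_faceProj_sq' liABD P Q
  have d4 := dist_faceProj_sq liABC P Q
  have d4' := dist_faceProj_sq' liABC P Q
  rw [kBCD] at d1 d1'
  rw [kACD] at d2 d2'
  rw [kABD] at d3 d3'
  rw [← hκ] at d4 d4'
  refine ⟨dist (midpoint ℝ P Q) (faceProj B C D P), rfl, ?_, ?_, ?_, ?_, ?_, ?_, ?_⟩
  · exact deq _ _ dist_nonneg dist_nonneg (by rw [d2, d1])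
  · exact deq _ _ dist_nonneg dist_nonneg (by rw [d3, d1])
  · exact deq _ _ dist_nonneg dist_nonneg (by rw [d4, d1])
  · exact deq _ _ dist_nonneg dist_nonneg (by rw [d1', d1])
  · exact deq _ _ dist_nonneg dist_nonneg (by rw [d2', d1])
  · exact deq _ _ dist_nonneg dist_nonneg (by rw [d3', d1])
  · exact deq _ _ dist_nonneg dist_nonneg (by rw [d4', d1])

end
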